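/- arXiv:1509.02628 — 2 statements merged into one kernel-verified Lean document; each statement's English description precedes it below -/
import Mathlib

section
/- Let N be a prime with N ≡ 3 (mod 4), let M = (N−1)/2, and let p be a positive integer coprime to N. Define the M×N complex matrix A by A[m, n] = exp(2πi·p·m²·n/N) for m = 1, …, M and n = 1, …, N. Then the coherence of A, namely μ(A) = max over 1 ≤ n ≠ n' ≤ N of (1/M)·|∑_{m=1}^{M} exp(2πi·p·m²·(n−n')/N)|, equals √(M+1)/(√2·M). -/
open Complex Real Finset

lemma abs_mul_gauss {c g : ℂ} {n : ℝ} (hn : 0 < n) (hc : c = 1 ∨ c = -1)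
    (hg : g ^ 2 = -(n : ℂ)) : ‖c * g - 1‖ = Real.sqrt (n + 1) := by
  have h1 := congrArg Complex.re hg
  have h2 := congrArg Complex.im hg
  rw [pow_two, Complex.mul_re] at h1
  rw [pow_two, Complex.mul_im] at h2
  simp only [Complex.neg_re, Complex.ofReal_re, Complex.neg_im, Complex.ofReal_im,
    neg_zero] at h1 h2
  have h2' : g.re * g.im = 0 := by linarith
  have hre : g.re = 0 := by
    rcases mul_eq_zero.mp h2' with h | h
    · exact h
    · exfalso; nlinarith
  have him : g.im * g.im = n := by nlinarith
  have hval : Complex.normSq (c * g - 1) = n + 1 := by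
    rcases hc with h | h
    · rw [h, one_mul, Complex.normSq_apply, Complex.sub_re, Complex.sub_im,
        Complex.one_re, Complex.one_im, hre]
      nlinarith
    · rw [h, neg_one_mul, Complex.normSq_apply, Complex.sub_re, Complex.sub_im,
        Complex.one_re, Complex.one_im, Complex.neg_re, Complex.neg_im, hre]
      nlinarith
  rw [Complex.norm_def, hval]

lemma key_sum {N : ℕ} [Fact N.Prime] (h4 : N % 4 = 3) {M : ℕ} (hM : 2 * M + 1 = N)
    {d : ZMod N} (hd : d ≠ 0) :
    ‖∑ m ∈ Finset.Icc 1 M, ZMod.stdAddChar (d * (m : ZMod N) ^ 2)‖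
      = Real.sqrt (N + 1) / 2 := by
  classical
  have hN3 : 3 ≤ N := by omega
  haveI : NeZero N := ⟨by omega⟩
  set ψ : AddChar (ZMod N) ℂ := ZMod.stdAddChar with hψ
  set χ : MulChar (ZMod N) ℂ := (quadraticChar (ZMod N)).ringHomComp (Int.castRingHom ℂ) with hχ
  have hchar : ringChar (ZMod N) ≠ 2 := by rw [ZMod.ringChar_zmod_n]; omega
  have hψprim : ψ.IsPrimitive := ZMod.isPrimitive_stdAddChar N
  have hχ₁ : χ ≠ 1 :=
    (MulChar.ringHomComp_ne_one_iff (by exact Int.cast_injective)).mpr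
      (quadraticChar_ne_one hchar)
  have hχ₂ : χ.IsQuadratic := (quadraticChar_isQuadratic (ZMod N)).comp _
  -- full Gauss sum over all of ZMod N
  have hfull : ∑ x : ZMod N, ψ (d * x ^ 2) = χ d * gaussSum χ ψ := by
    have h1 : ∑ x : ZMod N, ψ (d * x ^ 2)
        = ∑ t : ZMod N, (((quadraticChar (ZMod N)) t : ℂ) + 1) * ψ (d * t) := by
      rw [← Finset.sum_fiberwise Finset.univ (fun x : ZMod N => x ^ 2)
        (fun x => ψ (d * x ^ 2))]
      refine Finset.sum_congr rfl fun t _ => ?_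
      have h2 : ∀ x ∈ Finset.univ.filter (fun x : ZMod N => x ^ 2 = t),
          ψ (d * x ^ 2) = ψ (d * t) := by
        intro x hx
        rw [Finset.mem_filter] at hx
        rw [hx.2]
      rw [Finset.sum_congr rfl h2, Finset.sum_const, nsmul_eq_mul]
      congr 1
      have h3 := quadraticChar_card_sqrts hchar t
      have h4 : ({x : ZMod N | x ^ 2 = t}.toFinset : Finset (ZMod N))
          = Finset.univ.filter (fun x : ZMod N => x ^ 2 = t) := by
        ext x; simp
      rw [h4] at h3
      exact_mod_cast h3
    rw [h1]
    have h5 : ∀ t : ZMod N, (((quadraticChar (ZMod N)) t : ℂ) + 1) * ψ (d * t)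
        = χ t * (ψ.mulShift d) t + (ψ.mulShift d) t := by
      intro t
      rw [AddChar.mulShift_apply, hχ, MulChar.ringHomComp_apply]
      simp only [Int.coe_castRingHom]
      ring
    rw [Finset.sum_congr rfl fun t _ => h5 t, Finset.sum_add_distrib]
    have h6 : ∑ t : ZMod N, (ψ.mulShift d) t = 0 :=
      AddChar.sum_eq_zero_iff_ne_zero.mpr (hψprim hd)
    rw [h6, add_zero]
    have hu : (Units.mk0 d hd : ZMod N) = d := rfl
    have h7 := gaussSum_mulShift χ ψ (Units.mk0 d hd)
    rw [hu] at h7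
    have h8 : χ d * χ d = 1 := by
      rcases quadraticChar_dichotomy hd with h | h <;>
        simp [hχ, MulChar.ringHomComp_apply, h]
    calc ∑ t : ZMod N, χ t * (ψ.mulShift d) t = gaussSum χ (ψ.mulShift d) := rfl
      _ = χ d * (χ d * gaussSum χ (ψ.mulShift d)) := by rw [← mul_assoc, h8, one_mul]
      _ = χ d * gaussSum χ ψ := by rw [h7]
  -- halving: sum over all x equals 1 + 2 * (sum over 1..M)
  have hhalf : ∑ x : ZMod N, ψ (d * x ^ 2)
      = 1 + 2 * ∑ m ∈ Finset.Icc 1 M, ψ (d * (m : ZMod N) ^ 2) := by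
    have hbij : ∑ x : ZMod N, ψ (d * x ^ 2)
        = ∑ m ∈ Finset.range N, ψ (d * (m : ZMod N) ^ 2) := by
      refine Finset.sum_nbij (fun x : ZMod N => x.val) (fun x _ => ?_) (fun x _ y _ h => ?_)
        (fun m hm => ?_) (fun x _ => ?_)
      · exact Finset.mem_range.mpr (ZMod.val_lt x)
      · exact ZMod.val_injective N h
      · simp only [Finset.coe_range, Set.mem_Iio] at hm
        exact ⟨(m : ZMod N), by simp, by simp [ZMod.val_natCast_of_lt hm]⟩
      · rw [ZMod.natCast_val, ZMod.cast_id]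
    have hsplit : Finset.range N = insert 0 (Finset.Ioc 0 (2 * M)) := by
      ext x
      simp only [Finset.mem_range, Finset.mem_insert, Finset.mem_Ioc]
      omega
    rw [hbij, hsplit, Finset.sum_insert (by simp)]
    have h0 : ψ (d * ((0 : ℕ) : ZMod N) ^ 2) = 1 := by
      norm_num
    rw [h0]
    have hcons := Finset.sum_Ioc_consecutive (fun m : ℕ => ψ (d * (m : ZMod N) ^ 2))
      (Nat.zero_le M) (by omega : M ≤ 2 * M)
    have hrefl : ∑ m ∈ Finset.Ioc M (2 * M), ψ (d * (m : ZMod N) ^ 2)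
        = ∑ m ∈ Finset.Ioc 0 M, ψ (d * (m : ZMod N) ^ 2) := by
      refine Finset.sum_nbij (fun m => 2 * M + 1 - m) (fun m hm => ?_) (fun x hx y hy h => ?_)
        (fun m hm => ?_) (fun m hm => ?_)
      · simp only [Finset.mem_Ioc] at hm ⊢; omega
      · simp only [Finset.coe_Ioc, Set.mem_Ioc] at hx hy
        simp only at h
        omega
      · simp only [Finset.coe_Ioc, Set.mem_Ioc] at hm
        refine ⟨2 * M + 1 - m, ?_, ?_⟩
        · simp only [Finset.coe_Ioc, Set.mem_Ioc]; omega
        · simp only; omega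
      · simp only [Finset.mem_Ioc] at hm
        have hc : ((2 * M + 1 - m : ℕ) : ZMod N) = -(m : ZMod N) := by
          rw [Nat.cast_sub (by omega : m ≤ 2 * M + 1)]
          rw [show ((2 * M + 1 : ℕ) : ZMod N) = ((N : ℕ) : ZMod N) by rw [hM]]
          rw [ZMod.natCast_self, zero_sub]
        rw [hc, neg_sq]
    have hIcc : Finset.Icc 1 M = Finset.Ioc 0 M := by
      ext x; simp only [Finset.mem_Icc, Finset.mem_Ioc]; omega
    rw [← hcons, hrefl, hIcc]
    ring
  have hS : 2 * (∑ m ∈ Finset.Icc 1 M, ψ (d * (m : ZMod N) ^ 2))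
      = χ d * gaussSum χ ψ - 1 := by
    rw [← hfull, hhalf]; ring
  -- the square of the Gauss sum
  have hg2 : gaussSum χ ψ ^ 2 = -(N : ℂ) := by
    rw [gaussSum_sq hχ₁ hχ₂ hψprim]
    have h9 : χ (-1) = -1 := by
      rw [hχ, MulChar.ringHomComp_apply, quadraticChar_neg_one hchar, ZMod.card]
      have h2' : N % 2 = 1 := by omega
      rw [ZMod.χ₄_nat_eq_if_mod_four]
      simp [h2', h4]
    rw [h9, ZMod.card]; ring
  have hNpos : (0 : ℝ) < N := by positivity
  have hcd : χ d = 1 ∨ χ d = -1 := by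
    rcases quadraticChar_dichotomy hd with h | h <;> [left; right] <;>
      simp [hχ, MulChar.ringHomComp_apply, h]
  have habs : ‖χ d * gaussSum χ ψ - 1‖ = Real.sqrt ((N : ℝ) + 1) :=
    abs_mul_gauss hNpos hcd (by rw [hg2]; norm_cast)
  have h12 := congrArg (‖·‖) hS
  rw [norm_mul, Complex.norm_two, habs] at h12
  linarith

/-- Let `N` be a prime with `N ≡ 3 (mod 4)`, `M = (N−1)/2`, and `p` a
positive integer coprime to `N`. For the `M × N` matrix with entries
`A[m,n] = exp(2πi·p·m²·n/N)`, the coherence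
`μ(A) = max_{1 ≤ n ≠ n' ≤ N} (1/M)·|∑_{m=1}^{M} exp(2πi·p·m²·(n−n')/N)|`
equals `√(M+1)/(√2·M)`. -/
theorem coherence_partial_fourier
    (N M p : ℕ) (hN : N.Prime) (h4 : N % 4 = 3)
    (hM : M = (N - 1) / 2) (hp : 0 < p) (hcop : Nat.Coprime p N) :
    IsGreatest
      { μ : ℝ | ∃ n n' : ℕ, n ∈ Finset.Icc 1 N ∧ n' ∈ Finset.Icc 1 N ∧ n ≠ n' ∧
          μ = (1 / (M : ℝ)) * ‖∑ m ∈ Finset.Icc 1 M,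
            Complex.exp (2 * Real.pi * Complex.I * (p : ℂ) * (m : ℂ) ^ 2 *
              ((n : ℂ) - (n' : ℂ)) / (N : ℂ))‖ }
      (Real.sqrt (M + 1) / (Real.sqrt 2 * M)) := by
  haveI : Fact N.Prime := ⟨hN⟩
  haveI : NeZero N := ⟨by omega⟩
  have h2M : 2 * M + 1 = N := by omega
  have hM1 : 1 ≤ M := by omega
  have hval : ∀ n n' : ℕ, n ∈ Finset.Icc 1 N → n' ∈ Finset.Icc 1 N → n ≠ n' →
      (1 / (M : ℝ)) * ‖∑ m ∈ Finset.Icc 1 M,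
        Complex.exp (2 * Real.pi * Complex.I * (p : ℂ) * (m : ℂ) ^ 2 *
          ((n : ℂ) - (n' : ℂ)) / (N : ℂ))‖
      = Real.sqrt (M + 1) / (Real.sqrt 2 * M) := by
    intro n n' hn hn' hne
    rw [Finset.mem_Icc] at hn hn'
    set d : ZMod N := (p : ZMod N) * ((((n : ℤ) - (n' : ℤ)) : ℤ) : ZMod N) with hd
    have hp0 : (p : ZMod N) ≠ 0 := by
      intro h
      rw [ZMod.natCast_eq_zero_iff] at h
      have := hcop.symm.eq_one_of_dvd h
      omega
    have hd2 : ((((n : ℤ) - (n' : ℤ)) : ℤ) : ZMod N) ≠ 0 := by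
      intro h
      rw [ZMod.intCast_zmod_eq_zero_iff_dvd] at h
      have habs : |(n : ℤ) - (n' : ℤ)| < (N : ℤ) := abs_lt.mpr ⟨by omega, by omega⟩
      have := Int.eq_zero_of_abs_lt_dvd h habs
      omega
    have hdne : d ≠ 0 := mul_ne_zero hp0 hd2
    have hterm : ∀ m : ℕ, Complex.exp (2 * Real.pi * Complex.I * (p : ℂ) * (m : ℂ) ^ 2 *
          ((n : ℂ) - (n' : ℂ)) / (N : ℂ)) = ZMod.stdAddChar (d * (m : ZMod N) ^ 2) := by
      intro m
      have hcast : d * (m : ZMod N) ^ 2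
          = ((((p : ℤ) * (m : ℤ) ^ 2 * ((n : ℤ) - (n' : ℤ))) : ℤ) : ZMod N) := by
        rw [hd]
        push_cast
        ring
      rw [hcast, ZMod.stdAddChar_coe]
      congr 1
      push_cast
      ring
    rw [Finset.sum_congr rfl fun m _ => hterm m, key_sum h4 h2M hdne]
    -- arithmetic
    have hs2 : Real.sqrt 2 * Real.sqrt 2 = 2 := Real.mul_self_sqrt (by norm_num)
    have hNM : ((N : ℝ) + 1) = 2 * ((M : ℝ) + 1) := by
      have h' : (N : ℝ) = 2 * (M : ℝ) + 1 := by exact_mod_cast congrArg (Nat.cast (R := ℝ)) h2M.symm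
      rw [h']; ring
    rw [hNM, Real.sqrt_mul (by norm_num)]
    have hMpos : (0 : ℝ) < M := by exact_mod_cast hM1
    have hs2pos : (0 : ℝ) < Real.sqrt 2 := Real.sqrt_pos.mpr (by norm_num)
    field_simp
    linear_combination hs2
  constructor
  · exact ⟨2, 1, Finset.mem_Icc.mpr ⟨by omega, by omega⟩,
      Finset.mem_Icc.mpr ⟨le_refl 1, by omega⟩, by omega,
      (hval 2 1 (Finset.mem_Icc.mpr ⟨by omega, by omega⟩)
        (Finset.mem_Icc.mpr ⟨le_refl 1, by omega⟩) (by omega)).symm⟩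
  · rintro μ ⟨n, n', hn, hn', hne, rfl⟩
    rw [hval n n' hn hn' hne]
end

section
/- Let Φ be an M×N complex matrix satisfying the (k, δ)-restricted isometry property: (1−δ)·‖x‖₂² ≤ ‖Φx‖₂² ≤ (1+δ)·‖x‖₂² for all k-sparse complex vectors x ∈ ℂ^N. Let Φ' be the 2M×2N real matrix obtained from Φ by replacing each entry a + i·b by the 2×2 real block [[a, −b], [b, a]]. Then Φ' satisfies the (k, δ)-restricted isometry property for all k-sparse real vectors in ℝ^{2N}: (1−δ)·‖x‖₂² ≤ ‖Φ'x‖₂² ≤ (1+δ)·‖x‖₂² for every x ∈ ℝ^{2N} with at most k nonzero entries. -/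
open Matrix

/-- The 2×2 real block `[[a, −b], [b, a]]` representing the complex number `a + i·b`. -/
def Complex.realBlock (z : ℂ) : Matrix (Fin 2) (Fin 2) ℝ :=
  !![z.re, -z.im; z.im, z.re]

/-- The `2M × 2N` real matrix obtained from an `M × N` complex matrix by replacing
each entry `a + i·b` by the 2×2 real block `[[a, −b], [b, a]]`. -/
def Matrix.realRep {M N : ℕ} (Φ : Matrix (Fin M) (Fin N) ℂ) :
    Matrix (Fin M × Fin 2) (Fin N × Fin 2) ℝ :=
  fun p q => (Φ p.1 q.1).realBlock p.2 q.2

/-- If an `M × N` complex matrix `Φ` satisfies the `(k, δ)`-restricted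
isometry property for all `k`-sparse complex vectors, then its `2M × 2N` real
representation `Φ'` (each entry `a + i·b` replaced by `[[a, −b], [b, a]]`)
satisfies the `(k, δ)`-restricted isometry property for all `k`-sparse real vectors. -/
theorem realRep_restricted_isometry
    {M N : ℕ} (k : ℕ) (δ : ℝ) (Φ : Matrix (Fin M) (Fin N) ℂ)
    (hRIP : ∀ x : Fin N → ℂ,
      (Finset.univ.filter fun n => x n ≠ 0).card ≤ k →
        (1 - δ) * ∑ n, ‖x n‖ ^ 2 ≤ ∑ m, ‖Φ.mulVec x m‖ ^ 2 ∧
        ∑ m, ‖Φ.mulVec x m‖ ^ 2 ≤ (1 + δ) * ∑ n, ‖x n‖ ^ 2) :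
    ∀ x : Fin N × Fin 2 → ℝ,
      (Finset.univ.filter fun n => x n ≠ 0).card ≤ k →
        (1 - δ) * ∑ n, ‖x n‖ ^ 2 ≤ ∑ m, ‖Φ.realRep.mulVec x m‖ ^ 2 ∧
        ∑ m, ‖Φ.realRep.mulVec x m‖ ^ 2 ≤ (1 + δ) * ∑ n, ‖x n‖ ^ 2 := by
  intro x hx
  set z : Fin N → ℂ := fun n => ⟨x (n, 0), x (n, 1)⟩ with hz
  have hsupp : (Finset.univ.filter fun n => z n ≠ 0).card ≤ k := by
    refine le_trans (Finset.card_le_card_of_injOn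
      (fun n => if x (n, 0) ≠ 0 then (n, (0 : Fin 2)) else (n, 1)) ?_ ?_) hx
    · intro n hn
      simp only [Finset.coe_filter, Set.mem_setOf_eq, Finset.mem_filter, Finset.mem_univ, true_and] at hn ⊢
      by_cases h0 : x (n, 0) ≠ 0
      · simp [h0]
      · push_neg at h0
        simp only [h0, ne_eq, not_true_eq_false, if_false, ite_false, not_false_eq_true]
        intro hc
        exact hn (Complex.ext h0 hc)
    · intro a _ b _ h
      have := congrArg Prod.fst h
      simpa [apply_ite Prod.fst] using this
  obtain ⟨h1, h2⟩ := hRIP z hsupp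
  have hx2 : ∑ p : Fin N × Fin 2, ‖x p‖ ^ 2 = ∑ n, ‖z n‖ ^ 2 := by
    rw [Fintype.sum_prod_type]
    refine Finset.sum_congr rfl fun n _ => ?_
    rw [Fin.sum_univ_two, Complex.sq_norm, Complex.normSq_apply]
    simp [Real.norm_eq_abs, sq_abs, hz, pow_two]
  have hre : ∀ m, Φ.realRep.mulVec x (m, 0) = (Φ.mulVec z m).re := by
    intro m
    simp only [Matrix.mulVec, dotProduct, Matrix.realRep, Complex.realBlock,
      Fintype.sum_prod_type, Fin.sum_univ_two, Complex.re_sum]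
    refine Finset.sum_congr rfl fun n _ => ?_
    simp [Complex.mul_re, hz]; ring
  have him : ∀ m, Φ.realRep.mulVec x (m, 1) = (Φ.mulVec z m).im := by
    intro m
    simp only [Matrix.mulVec, dotProduct, Matrix.realRep, Complex.realBlock,
      Fintype.sum_prod_type, Fin.sum_univ_two, Complex.im_sum]
    refine Finset.sum_congr rfl fun n _ => ?_
    simp [Complex.mul_im, hz]; ring
  have hΦ2 : ∑ p : Fin M × Fin 2, ‖Φ.realRep.mulVec x p‖ ^ 2
      = ∑ m, ‖Φ.mulVec z m‖ ^ 2 := by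
    rw [Fintype.sum_prod_type]
    refine Finset.sum_congr rfl fun m _ => ?_
    rw [Fin.sum_univ_two, hre m, him m, Complex.sq_norm,
      Complex.normSq_apply]
    simp [Real.norm_eq_abs, sq_abs, pow_two]
  rw [hx2, hΦ2]
  exact ⟨h1, h2⟩
end
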